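/- arXiv:2003.06657 — 4 statements merged into one kernel-verified Lean document; each statement's English description precedes it below -/
import Mathlib

section
/- Let V be a normed complex vector space, let T : V → V be a linear map with ‖T(p)‖ ≤ ‖p‖ for all p, let r ∈ (0,1), f ∈ V, and suppose p∞ ∈ V satisfies p∞ = (1−r)p∞ − r·T(p∞) + r·f. If the sequence (pₙ) is defined by pₙ = (1−r)pₙ₋₁ − r·T(pₙ₋₁) + r·f, and V is an inner product space with γ := inf_{w≠0} ‖(Id+T)w‖/‖w‖, then ‖pₙ − p∞‖ ≤ (1 − r(1−r)γ²)^{n/2} · ‖p₀ − p∞‖ for all n ≥ 0. -/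
open scoped InnerProductSpace

theorem stmt_3 {V : Type*} [NormedAddCommGroup V] [InnerProductSpace ℂ V]
    [FiniteDimensional ℂ V] (T : V →ₗ[ℂ] V) (hT : ∀ w, ‖T w‖ ≤ ‖w‖)
    (r : ℝ) (hr0 : 0 < r) (hr1 : r < 1) (f pinf : V)
    (hfix : pinf = (1 - r) • pinf - r • T pinf + r • f)
    (p : ℕ → V) (hp : ∀ n : ℕ, p (n + 1) = (1 - r) • p n - r • T (p n) + r • f)
    (γ : ℝ) (hγ : γ = sInf {x : ℝ | ∃ w : V, w ≠ 0 ∧ x = ‖w + T w‖ / ‖w‖}) :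
    ∀ n : ℕ, ‖p n - pinf‖ ≤ (1 - r * (1 - r) * γ ^ 2) ^ ((n : ℝ) / 2) * ‖p 0 - pinf‖ := by
  set S : Set ℝ := {x : ℝ | ∃ w : V, w ≠ 0 ∧ x = ‖w + T w‖ / ‖w‖} with hS
  set c : ℝ := 1 - r * (1 - r) * γ ^ 2 with hc
  have hSlb : ∀ x ∈ S, (0:ℝ) ≤ x := by
    rintro x ⟨w, hw, rfl⟩
    exact div_nonneg (norm_nonneg _) (norm_nonneg _)
  have hγ0 : 0 ≤ γ := by
    by_cases h : ∃ w : V, w ≠ 0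
    · obtain ⟨w, hw⟩ := h
      rw [hγ]
      exact le_csInf ⟨_, ⟨w, hw, rfl⟩⟩ hSlb
    · have : S = ∅ := by
        ext x; simp only [hS, Set.mem_setOf_eq, Set.mem_empty_iff_false, iff_false]
        rintro ⟨w, hw, _⟩; exact h ⟨w, hw⟩
      rw [hγ, this, Real.sInf_empty]
  have hA : ∀ w : V, γ * ‖w‖ ≤ ‖w + T w‖ := by
    intro w
    rcases eq_or_ne w 0 with rfl | hw
    · simp
    · have hwpos : 0 < ‖w‖ := norm_pos_iff.mpr hw
      have : γ ≤ ‖w + T w‖ / ‖w‖ := by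
        rw [hγ]
        exact csInf_le ⟨0, hSlb⟩ ⟨w, hw, rfl⟩
      calc γ * ‖w‖ ≤ (‖w + T w‖ / ‖w‖) * ‖w‖ := by
            exact mul_le_mul_of_nonneg_right this hwpos.le
        _ = ‖w + T w‖ := by field_simp
  -- key norm expansion
  have hexp : ∀ (s : ℝ) (w u : V), ‖w - s • u‖^2
      = ‖w‖^2 - 2*(s * RCLike.re (⟪w, u⟫_ℂ)) + s^2*‖u‖^2 := by
    intro s w u
    rw [norm_sub_sq (𝕜 := ℂ), RCLike.real_smul_eq_coe_smul (K := ℂ), inner_smul_right, norm_smul]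
    simp [Complex.mul_re]
    rw [← sq_abs s]
    ring
  have hkey : ∀ w : V, ‖(1 - r) • w - r • T w‖^2 ≤ c * ‖w‖^2 := by
    intro w
    have hrw : (1 - r) • w - r • T w = w - r • (w + T w) := by module
    have h1 : ‖w - r • (w + T w)‖^2
        = ‖w‖^2 - 2*(r * RCLike.re (⟪w, w + T w⟫_ℂ)) + r^2*‖w + T w‖^2 := hexp r w (w + T w)
    have h2 : ‖w - (1:ℝ) • (w + T w)‖^2
        = ‖w‖^2 - 2*((1:ℝ) * RCLike.re (⟪w, w + T w⟫_ℂ)) + (1:ℝ)^2*‖w + T w‖^2 :=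
      hexp 1 w (w + T w)
    have h3 : w - (1:ℝ) • (w + T w) = -(T w) := by module
    have h4 : ‖T w‖^2 = ‖w‖^2 - 2*RCLike.re (⟪w, w + T w⟫_ℂ) + ‖w + T w‖^2 := by
      rw [← norm_neg (T w), ← h3, h2]; ring
    have h5 : ‖T w‖ ≤ ‖w‖ := hT w
    have h6 : γ * ‖w‖ ≤ ‖w + T w‖ := hA w
    have h7 : 0 ≤ ‖T w‖ := norm_nonneg _
    have h8 : 0 ≤ ‖w‖ := norm_nonneg _
    have h9 : 0 ≤ γ * ‖w‖ := mul_nonneg hγ0 h8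
    have h5' : ‖T w‖^2 ≤ ‖w‖^2 := by nlinarith
    have h6' : γ^2 * ‖w‖^2 ≤ ‖w + T w‖^2 := by nlinarith
    rw [hrw, h1, hc]
    nlinarith [mul_le_mul_of_nonneg_left h6' (by nlinarith : (0:ℝ) ≤ r*(1-r)),
      mul_le_mul_of_nonneg_left h5' hr0.le]
  have hc0 : 0 ≤ c := by
    by_cases h : ∃ w : V, w ≠ 0
    · obtain ⟨w, hw⟩ := h
      have hwpos : 0 < ‖w‖ := norm_pos_iff.mpr hw
      have := hkey w
      nlinarith [sq_nonneg ‖(1 - r) • w - r • T w‖, mul_pos hwpos hwpos]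
    · have : S = ∅ := by
        ext x; simp only [hS, Set.mem_setOf_eq, Set.mem_empty_iff_false, iff_false]
        rintro ⟨w, hw, _⟩; exact h ⟨w, hw⟩
      have hγz : γ = 0 := by rw [hγ, this, Real.sInf_empty]
      rw [hc, hγz]; norm_num
  have hrec : ∀ n : ℕ, p (n+1) - pinf = (1 - r) • (p n - pinf) - r • T (p n - pinf) := by
    intro n
    rw [hp, map_sub]
    nth_rewrite 1 [hfix]
    module
  have hsq : ∀ n : ℕ, ‖p n - pinf‖^2 ≤ c^n * ‖p 0 - pinf‖^2 := by
    intro n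
    induction n with
    | zero => simp
    | succ n ih =>
      calc ‖p (n+1) - pinf‖^2 = ‖(1 - r) • (p n - pinf) - r • T (p n - pinf)‖^2 := by
            rw [hrec]
        _ ≤ c * ‖p n - pinf‖^2 := hkey _
        _ ≤ c * (c^n * ‖p 0 - pinf‖^2) := mul_le_mul_of_nonneg_left ih hc0
        _ = c^(n+1) * ‖p 0 - pinf‖^2 := by ring
  intro n
  have h := hsq n
  have hrpow : c ^ ((n : ℝ) / 2) = Real.sqrt (c ^ n) := by
    rw [show ((n : ℝ) / 2) = (n : ℝ) * (1/2) by ring, Real.rpow_mul hc0,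
      Real.rpow_natCast, Real.sqrt_eq_rpow]
  rw [hrpow]
  calc ‖p n - pinf‖ = Real.sqrt (‖p n - pinf‖^2) := (Real.sqrt_sq (norm_nonneg _)).symm
    _ ≤ Real.sqrt (c^n * ‖p 0 - pinf‖^2) := Real.sqrt_le_sqrt h
    _ = Real.sqrt (c^n) * ‖p 0 - pinf‖ := by
        rw [Real.sqrt_mul (pow_nonneg hc0 n), Real.sqrt_sq (norm_nonneg _)]
end

section
/- Let V be a finite-dimensional complex vector space with Hermitian inner product t, and let a : V × V → ℂ be a sesquilinear form such that Im(a(u,u)) ≤ 0 for all u ∈ V. Assume that for every q ∈ V there is a unique w ∈ V with a(w,v) − i·t(w,v) = t(q,v) for all v ∈ V. Define S(q) := q + 2i·w. Then ‖S(q)‖_t ≤ ‖q‖_t for all q ∈ V, where ‖·‖_t is the norm induced by t. -/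
theorem stmt_6 {V : Type*} [NormedAddCommGroup V] [InnerProductSpace ℂ V]
    [FiniteDimensional ℂ V] (a : V →ₗ[ℂ] V →ₛₗ[starRingEnd ℂ] ℂ)
    (ha : ∀ u : V, (a u u).im ≤ 0) (Sol : V → V)
    (hSol : ∀ q v : V, a (Sol q) v - Complex.I * (inner ℂ v (Sol q) : ℂ) = (inner ℂ v q : ℂ))
    (hUniq : ∀ q w : V,
      (∀ v : V, a w v - Complex.I * (inner ℂ v w : ℂ) = (inner ℂ v q : ℂ)) → w = Sol q) :
    ∀ q : V, ‖q + (2 * Complex.I) • Sol q‖ ≤ ‖q‖ := by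
  intro q
  set w := Sol q with hw
  have key : (inner ℂ w q : ℂ) = a w w - Complex.I * (inner ℂ w w : ℂ) := (hSol q w).symm
  have hww : (inner ℂ w w : ℂ) = (‖w‖ : ℂ) ^ 2 := by
    rw [inner_self_eq_norm_sq_to_K]
    norm_cast
  have hqw : (inner ℂ q w : ℂ) = starRingEnd ℂ (a w w) + Complex.I * (‖w‖ : ℂ) ^ 2 := by
    rw [← inner_conj_symm, key, hww]
    simp [map_sub, map_mul, Complex.conj_I]
  have hre : ((inner ℂ q ((2 * Complex.I) • w) : ℂ)).re = 2 * (a w w).im - 2 * ‖w‖ ^ 2 := by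
    rw [inner_smul_right, hqw]
    simp [Complex.add_re, Complex.mul_re, Complex.mul_im]
    simp [← Complex.ofReal_pow]
    ring
  have expand := @norm_add_sq ℂ V _ _ _ q ((2 * Complex.I) • w)
  have hny : ‖(2 * Complex.I) • w‖ = 2 * ‖w‖ := by
    rw [norm_smul]
    simp
  have hsq : ‖q + (2 * Complex.I) • w‖ ^ 2 ≤ ‖q‖ ^ 2 := by
    rw [expand, hny]
    have : RCLike.re (inner ℂ q ((2 * Complex.I) • w) : ℂ) = 2 * (a w w).im - 2 * ‖w‖ ^ 2 := hre
    rw [this]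
    nlinarith [ha w]
  have h1 := norm_nonneg (q + (2 * Complex.I) • w)
  have h2 := norm_nonneg q
  nlinarith
end

section
/- Let V be a finite-dimensional complex inner product space with inner product t, W a subspace, and Π = 2P − Id where P is the orthogonal projection onto W. Suppose S : V → V is linear and C ⊆ V × V is the set of pairs (u_D, u_N) with u_N + i·u_D = S(u_N − i·u_D). Assume V × V = (W × W⊥) ⊕ C as a direct sum, with projection P_h onto C along W × W⊥. Then for any f ∈ V, setting p_D = i(Id−Π)f/4, p_N = (Id+Π)f/4 and (u_D, u_N) = P_h(p_D, p_N), the element u_N − i·u_D satisfies (Id + Π∘S)(u_N − i·u_D) = f. -/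
theorem stmt_8 {V : Type*} [NormedAddCommGroup V] [InnerProductSpace ℂ V]
    [FiniteDimensional ℂ V] (W : Submodule ℂ V) (Xp : V → V)
    (hXp : ∀ v, Xp v = (2 : ℂ) • ((W.orthogonalProjection v : V)) - v)
    (S : V →ₗ[ℂ] V) (C : Set (V × V))
    (hC : C = {x : V × V | x.2 + Complex.I • x.1 = S (x.2 - Complex.I • x.1)})
    (Ph : V × V → V × V)
    (hPh1 : ∀ x, Ph x ∈ C)
    (hPh2 : ∀ x, (x - Ph x).1 ∈ W ∧ (x - Ph x).2 ∈ Wᗮ)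
    (f : V) :
    ∀ pD pN uD uN : V,
      pD = (Complex.I / 4) • (f - Xp f) →
      pN = (4 : ℂ)⁻¹ • (f + Xp f) →
      (uD, uN) = Ph (pD, pN) →
      (uN - Complex.I • uD) + Xp (S (uN - Complex.I • uD)) = f := by
  intro pD pN uD uN hpD hpN huv
  have hmem := hPh1 (pD, pN)
  rw [← huv, hC] at hmem
  simp only [Set.mem_setOf_eq] at hmem
  obtain ⟨hw, hw'⟩ := hPh2 (pD, pN)
  rw [← huv] at hw hw'
  simp only [Prod.fst_sub, Prod.snd_sub] at hw hw'
  set g : V →ₗ[ℂ] V := W.subtype.comp (W.orthogonalProjection).toLinearMap with hg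
  have hgdef : ∀ v, g v = (W.orthogonalProjection v : V) := fun _ => rfl
  have hXf : Xp f = (2 : ℂ) • g f - f := by rw [hXp]; rfl
  have hpDval : pD = (Complex.I / 2) • (f - g f) := by
    rw [hpD, hXf]; match_scalars <;> ring
  have hpNval : pN = (2 : ℂ)⁻¹ • g f := by
    rw [hpN, hXf]; match_scalars <;> ring
  have hgpD : g pD = 0 := by
    rw [hpDval, map_smul, hgdef,
      Submodule.orthogonalProjectionOnto_apply_of_mem_orthogonal
        (by simpa [hgdef] using Submodule.sub_starProjection_mem_orthogonal (K := W) f)]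
    simp
  have hggf : g (g f) = g f := by
    rw [hgdef (g f), ← Submodule.starProjection_apply, Submodule.starProjection_eq_self_iff.mpr]
    rw [hgdef]; exact (W.orthogonalProjection f).2
  have hgpN : g pN = pN := by rw [hpNval, map_smul, hggf]
  have hguD : g uD = uD - pD := by
    have h1 : g (pD - uD) = pD - uD := Submodule.starProjection_eq_self_iff.mpr hw
    rw [map_sub, hgpD] at h1
    have h2 := congrArg Neg.neg h1
    simpa [neg_sub] using h2
  have hguN : g uN = pN := by
    have h1 : g (pN - uN) = 0 := by
      rw [hgdef, Submodule.orthogonalProjectionOnto_apply_of_mem_orthogonal hw']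
      simp
    rw [map_sub, hgpN, sub_eq_zero] at h1
    exact h1.symm
  rw [← hmem, hXp, ← hgdef, map_add, map_smul, hguD, hguN, hpDval, hpNval]
  match_scalars <;> simp [Complex.ext_iff] <;> ring
end

section
/- Let V be a finite-dimensional complex inner product space, S : V → V a linear contraction, Π : V → V a linear isometry with Π² = Id, W the fixed subspace of Π (i.e. Π = 2P − Id with P the orthogonal projection onto W), and suppose that the only p ∈ V with (Id + Π∘S)p = 0 is p = 0. Then for all p ∈ V, Re⟨p, (Id + ΠS)p⟩ ≥ (γ²/2)‖p‖² with γ > 0, so the sesquilinear form (p,q) ↦ ⟨q, (Id+ΠS)p⟩ is coercive on V. -/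
theorem stmt_15 {V : Type*} [NormedAddCommGroup V] [InnerProductSpace ℂ V]
    [FiniteDimensional ℂ V] [Nontrivial V] (S Pi : V →ₗ[ℂ] V)
    (hS : ∀ w, ‖S w‖ ≤ ‖w‖) (hPi : ∀ u, ‖Pi u‖ = ‖u‖)
    (hPi2 : ∀ u, Pi (Pi u) = u)
    (hker : ∀ p : V, p + Pi (S p) = 0 → p = 0)
    (γ : ℝ) (hγ : γ = sInf {x : ℝ | ∃ w : V, w ≠ 0 ∧ x = ‖w + Pi (S w)‖ / ‖w‖}) :
    0 < γ ∧ ∀ p : V, γ ^ 2 / 2 * ‖p‖ ^ 2 ≤ (inner ℂ p (p + Pi (S p)) : ℂ).re := by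
  set T : V →ₗ[ℂ] V := LinearMap.id + Pi ∘ₗ S with hT
  have hTapp : ∀ w, T w = w + Pi (S w) := fun w => rfl
  have hinj : Function.Injective T := by
    rw [← LinearMap.ker_eq_bot, LinearMap.ker_eq_bot']
    intro p hp
    exact hker p (by rw [← hTapp]; exact hp)
  have hbij : Function.Bijective T :=
    ⟨hinj, (LinearMap.injective_iff_surjective (f := T)).mp hinj⟩
  let e := LinearEquiv.ofBijective T hbij
  let ce := e.toContinuousLinearEquiv
  obtain ⟨c, hc0, hc⟩ : ∃ c : ℝ, 0 < c ∧ ∀ w : V, c * ‖w‖ ≤ ‖w + Pi (S w)‖ := by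
    have ha := ce.antilipschitz
    set K : NNReal := ‖(ce.symm : V →L[ℂ] V)‖₊ with hK
    have hKle : ∀ w : V, ‖w‖ ≤ K * ‖w + Pi (S w)‖ := by
      intro w
      have h := ha.le_mul_dist w 0
      have hcew : ce w = w + Pi (S w) := hTapp w
      have hce0 : ce 0 = 0 := map_zero _
      rw [dist_eq_norm, dist_eq_norm, hcew, hce0, sub_zero, sub_zero] at h
      exact h
    have hKpos : (0:ℝ) < K := by
      by_contra h
      push_neg at h
      obtain ⟨w, hw⟩ := exists_ne (0 : V)
      have h1 := hKle w
      have h2 : (K : ℝ) * ‖w + Pi (S w)‖ ≤ 0 :=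
        mul_nonpos_of_nonpos_of_nonneg h (norm_nonneg _)
      have : ‖w‖ ≤ 0 := le_trans h1 h2
      exact hw (norm_le_zero_iff.mp this)
    refine ⟨(K : ℝ)⁻¹, by positivity, fun w => ?_⟩
    rw [inv_mul_le_iff₀ hKpos]
    exact hKle w
  set A : Set ℝ := {x : ℝ | ∃ w : V, w ≠ 0 ∧ x = ‖w + Pi (S w)‖ / ‖w‖} with hA
  have hAne : A.Nonempty := by
    obtain ⟨w, hw⟩ := exists_ne (0 : V)
    exact ⟨‖w + Pi (S w)‖ / ‖w‖, w, hw, rfl⟩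
  have hAlb : ∀ x ∈ A, c ≤ x := by
    rintro x ⟨w, hw, rfl⟩
    rw [le_div_iff₀ (norm_pos_iff.mpr hw)]
    exact hc w
  have hγc : c ≤ γ := hγ ▸ le_csInf hAne hAlb
  have hγpos : 0 < γ := lt_of_lt_of_le hc0 hγc
  have hγle : ∀ w : V, γ * ‖w‖ ≤ ‖w + Pi (S w)‖ := by
    intro w
    rcases eq_or_ne w 0 with rfl | hw
    · simp
    · have hmem : ‖w + Pi (S w)‖ / ‖w‖ ∈ A := ⟨w, hw, rfl⟩
      have := csInf_le ⟨c, hAlb⟩ hmem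
      rw [← hγ] at this
      rw [← le_div_iff₀ (norm_pos_iff.mpr hw)]
      exact this
  refine ⟨hγpos, fun p => ?_⟩
  have h1 : γ ^ 2 * ‖p‖ ^ 2 ≤ ‖p + Pi (S p)‖ ^ 2 := by
    have := pow_le_pow_left₀ (mul_nonneg hγpos.le (norm_nonneg p)) (hγle p) 2
    calc γ ^ 2 * ‖p‖ ^ 2 = (γ * ‖p‖) ^ 2 := by ring
    _ ≤ _ := this
  have h2 : ‖p + Pi (S p)‖ ^ 2
      = ‖p‖ ^ 2 + 2 * (inner ℂ p (Pi (S p)) : ℂ).re + ‖Pi (S p)‖ ^ 2 := by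
    simpa using @norm_add_sq ℂ V _ _ _ p (Pi (S p))
  have h3 : (inner ℂ p (p + Pi (S p)) : ℂ).re
      = ‖p‖ ^ 2 + (inner ℂ p (Pi (S p)) : ℂ).re := by
    rw [inner_add_right]
    have hps : (inner ℂ p p : ℂ).re = ‖p‖ ^ 2 := by
      simpa using inner_self_eq_norm_sq (𝕜 := ℂ) (x := p)
    rw [Complex.add_re, hps]
  have h4 : ‖Pi (S p)‖ ^ 2 ≤ ‖p‖ ^ 2 := by
    have : ‖Pi (S p)‖ ≤ ‖p‖ := by rw [hPi]; exact hS p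
    exact pow_le_pow_left₀ (norm_nonneg _) this 2
  rw [h3]
  nlinarith [h1, h2, h4]
end
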